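/- Define, for 0 < ε < 1/2 and s ∈ ℂ with Re s = 1/2, φ_ε(s) = (1/π) (∫₀^{1−ε} + ∫_{1+ε}^∞) t^{s−1}/(1 − t) dt. Then there exists an absolute constant C > 0 such that |φ_ε(s)| ≤ C |s| for all 0 < ε < 1/2 and all s with Re s = 1/2. -/

import Mathlib

open MeasureTheory Set Complex Filter intervalIntegral
open scoped Interval

/-- The truncation `φ_ε(s) = (1/π)(∫₀^{1−ε} + ∫_{1+ε}^∞) t^{s−1}/(1−t) dt` of the principal
value integral `(1/π) PV ∫₀^∞ t^{s−1}/(1−t) dt`. -/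
noncomputable def phiEps (ε : ℝ) (s : ℂ) : ℂ :=
  ((1 / Real.pi : ℝ) : ℂ) *
    ((∫ t in Ioo (0 : ℝ) (1 - ε), (t : ℂ) ^ (s - 1) / (1 - (t : ℂ))) +
      ∫ t in Ioi (1 + ε), (t : ℂ) ^ (s - 1) / (1 - (t : ℂ)))

private lemma one_sub_ofReal_ne {t : ℝ} (ht : t ≠ 1) : (1 : ℂ) - (t : ℂ) ≠ 0 := by
  rw [sub_ne_zero]
  exact fun h => ht (by exact_mod_cast h.symm)

private lemma norm_one_sub_ofReal (t : ℝ) : ‖(1 : ℂ) - (t : ℂ)‖ = |1 - t| := by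
  rw [show (1 : ℂ) - (t : ℂ) = ((1 - t : ℝ) : ℂ) by push_cast; ring, Complex.norm_real,
    Real.norm_eq_abs]

private lemma log_integral {a b : ℝ} (h : ∀ t ∈ [[a, b]], (1 : ℝ) - t ≠ 0) :
    ∫ t in a..b, (1 : ℂ) / (1 - (t : ℂ)) = ((Real.log (1 - a) - Real.log (1 - b) : ℝ) : ℂ) := by
  have h1 : ∀ t : ℝ, (1 : ℂ) / (1 - (t : ℂ)) = ((1 / (1 - t) : ℝ) : ℂ) := by
    intro t; push_cast; ring
  simp_rw [h1]
  rw [intervalIntegral.integral_ofReal]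
  congr 1
  have hderiv : ∀ t ∈ [[a, b]], HasDerivAt (fun t : ℝ => -Real.log (1 - t)) (1 / (1 - t)) t := by
    intro t ht
    have h1 : HasDerivAt (fun t : ℝ => 1 - t) (-1) t := by
      simpa using (hasDerivAt_id t).const_sub 1
    have h2 := (Real.hasDerivAt_log (h t ht)).comp t h1
    have h3 := h2.neg
    have h4 : HasDerivAt (fun t : ℝ => -Real.log (1 - t)) (-((1 - t)⁻¹ * -1)) t := h3
    convert h4 using 1
    ring
  have hcont : ContinuousOn (fun t : ℝ => 1 / (1 - t)) [[a, b]] :=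
    ContinuousOn.div continuousOn_const ((continuous_const.sub continuous_id).continuousOn) h
  rw [intervalIntegral.integral_eq_sub_of_hasDerivAt hderiv hcont.intervalIntegrable]
  ring

set_option maxHeartbeats 1000000 in
private lemma key {s : ℂ} (hre : s.re = 1 / 2) {ε : ℝ} (hε0 : 0 < ε) (hε2 : ε < 1 / 2) :
    ‖(∫ t in Ioo (0 : ℝ) (1 - ε), (t : ℂ) ^ (s - 1) / (1 - (t : ℂ))) +
      ∫ t in Ioi (1 + ε), (t : ℂ) ^ (s - 1) / (1 - (t : ℂ))‖ ≤ 42 * ‖s‖ := by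
  set f : ℝ → ℂ := fun t => (t : ℂ) ^ (s - 1) / (1 - (t : ℂ)) with hfdef
  set G : ℝ → ℂ := fun t => ((t : ℂ) ^ (s - 1) - 1) / (1 - (t : ℂ)) with hGdef
  set H : ℝ → ℂ := fun t => (1 : ℂ) / (1 - (t : ℂ)) with hHdef
  have hs2 : (1 : ℝ) / 2 ≤ ‖s‖ := by
    have h := Complex.abs_re_le_norm s
    rw [hre] at h
    calc (1 : ℝ) / 2 = |(1 : ℝ) / 2| := (_root_.abs_of_pos (by norm_num)).symm
    _ ≤ _ := h
  have hs1 : ‖s - 1‖ ≤ 3 * ‖s‖ := by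
    calc ‖s - 1‖ ≤ ‖s‖ + ‖(1 : ℂ)‖ := norm_sub_le _ _
    _ = ‖s‖ + 1 := by simp
    _ ≤ 3 * ‖s‖ := by linarith
  have hsne1 : s ≠ 1 := by
    intro h
    rw [h, Complex.one_re] at hre
    norm_num at hre
  have hs1ne : s - 1 ≠ 0 := sub_ne_zero.mpr hsne1
  have hnorm : ∀ t : ℝ, 0 < t → ‖(t : ℂ) ^ (s - 1)‖ = t ^ (-(1 / 2) : ℝ) := by
    intro t ht
    rw [Complex.norm_cpow_eq_rpow_re_of_pos ht]
    congr 1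
    rw [Complex.sub_re, Complex.one_re, hre]
    norm_num
  have hcont : ∀ {S : Set ℝ}, (∀ t ∈ S, 0 < t ∧ t ≠ 1) → ContinuousOn f S := by
    intro S hS t ht
    exact ((continuousAt_ofReal_cpow_const t (s - 1) (Or.inr (hS t ht).1.ne')).div
      ((continuous_const.sub Complex.continuous_ofReal).continuousAt)
      (one_sub_ofReal_ne (hS t ht).2)).continuousWithinAt
  -- majorants and integrability
  have hmaj1 : IntegrableOn (fun t : ℝ => 2 * t ^ (-(1 / 2) : ℝ)) (Ioc (0 : ℝ) (1 / 2)) := by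
    exact (intervalIntegrable_iff_integrableOn_Ioc_of_le (by norm_num)).mp
      ((intervalIntegral.intervalIntegrable_rpow' (by norm_num)).const_mul 2)
  have hbd1 : ∀ t ∈ Ioc (0 : ℝ) (1 / 2), ‖f t‖ ≤ 2 * t ^ (-(1 / 2) : ℝ) := by
    intro t ht
    have h0 : 0 < t := ht.1
    have h2 : t ≤ 1 / 2 := ht.2
    show ‖(t : ℂ) ^ (s - 1) / (1 - (t : ℂ))‖ ≤ _
    rw [norm_div, hnorm t h0, norm_one_sub_ofReal, _root_.abs_of_pos (by linarith)]
    have hp : 0 ≤ t ^ (-(1 / 2) : ℝ) := Real.rpow_nonneg h0.le _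
    rw [div_le_iff₀ (by linarith)]
    nlinarith
  have hi1 : IntervalIntegrable f volume 0 (1 / 2) := by
    rw [intervalIntegrable_iff_integrableOn_Ioc_of_le (by norm_num)]
    refine Integrable.mono' hmaj1
      ((hcont ?_).aestronglyMeasurable measurableSet_Ioc) ?_
    · intro t ht
      exact ⟨ht.1, ne_of_lt (lt_of_le_of_lt ht.2 (by norm_num))⟩
    · rw [ae_restrict_iff' measurableSet_Ioc]
      exact Eventually.of_forall hbd1
  have hi2 : IntervalIntegrable f volume (1 / 2) (1 - ε) := by
    apply (hcont ?_).intervalIntegrable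
    intro t ht
    rw [uIcc_of_le (by linarith)] at ht
    exact ⟨by linarith [ht.1], ne_of_lt (by linarith [ht.2])⟩
  have hi3 : IntervalIntegrable f volume (1 + ε) 2 := by
    apply (hcont ?_).intervalIntegrable
    intro t ht
    rw [uIcc_of_le (by linarith)] at ht
    exact ⟨by linarith [ht.1], ne_of_gt (by linarith [ht.1])⟩
  have hmaj5 : IntegrableOn (fun t : ℝ => 2 * t ^ (-(3 / 2) : ℝ)) (Ioi (2 : ℝ)) :=
    (integrableOn_Ioi_rpow_of_lt (by norm_num) (by norm_num)).const_mul 2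
  have hbd5 : ∀ t ∈ Ioi (2 : ℝ), ‖f t‖ ≤ 2 * t ^ (-(3 / 2) : ℝ) := by
    intro t ht
    have h2 : (2 : ℝ) < t := ht
    show ‖(t : ℂ) ^ (s - 1) / (1 - (t : ℂ))‖ ≤ _
    rw [norm_div, hnorm t (by linarith), norm_one_sub_ofReal, _root_.abs_of_neg (by linarith), neg_sub]
    have hp : 0 ≤ t ^ (-(1 / 2) : ℝ) := Real.rpow_nonneg (by linarith) _
    have h32 : t ^ (-(3 / 2) : ℝ) = t ^ (-(1 / 2) : ℝ) * t⁻¹ := by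
      rw [show (-(3 / 2) : ℝ) = -(1 / 2) + -1 by norm_num,
        Real.rpow_add (by linarith : (0 : ℝ) < t), Real.rpow_neg_one]
    rw [div_le_iff₀ (by linarith : (0 : ℝ) < t - 1), h32]
    have hti : t⁻¹ ≤ 1 / 2 := by
      rw [inv_le_comm₀ (by linarith) (by norm_num)]
      linarith
    have htinv : t * t⁻¹ = 1 := mul_inv_cancel₀ (by linarith)
    nlinarith
  have hi5 : IntegrableOn f (Ioi (2 : ℝ)) := by
    refine Integrable.mono' hmaj5
      ((hcont ?_).aestronglyMeasurable measurableSet_Ioi) ?_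
    · intro t ht
      have := mem_Ioi.mp ht
      exact ⟨by linarith, ne_of_gt (by linarith)⟩
    · rw [ae_restrict_iff' measurableSet_Ioi]
      exact Eventually.of_forall hbd5
  have hi4 : IntegrableOn f (Ioc (1 + ε) 2) :=
    (intervalIntegrable_iff_integrableOn_Ioc_of_le (by linarith)).mp hi3
  -- splitting
  have hA : (∫ t in Ioo (0 : ℝ) (1 - ε), f t) =
      (∫ t in (0 : ℝ)..(1 / 2), f t) + ∫ t in (1 / 2 : ℝ)..(1 - ε), f t := by
    rw [← integral_Ioc_eq_integral_Ioo,
      ← intervalIntegral.integral_of_le (by linarith : (0 : ℝ) ≤ 1 - ε),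
      ← intervalIntegral.integral_add_adjacent_intervals hi1 hi2]
  have hB : (∫ t in Ioi (1 + ε), f t) =
      (∫ t in (1 + ε : ℝ)..2, f t) + ∫ t in Ioi (2 : ℝ), f t := by
    rw [intervalIntegral.integral_of_le (by linarith : (1 + ε : ℝ) ≤ 2),
      ← setIntegral_union (Ioc_disjoint_Ioi le_rfl) measurableSet_Ioi hi4 hi5,
      Ioc_union_Ioi_eq_Ioi (by linarith)]
  -- decompose f = G + H
  have hfGH : ∀ t : ℝ, f t = G t + H t := by
    intro t
    show (t : ℂ) ^ (s - 1) / (1 - (t : ℂ)) = _ + _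
    rw [hGdef, hHdef, ← add_div, sub_add_cancel]
  -- bound for G
  have hG : ∀ t : ℝ, 1 / 2 ≤ t → t ≤ 2 → ‖G t‖ ≤ 4 * ‖s - 1‖ := by
    intro t h1 h2
    rcases eq_or_ne t 1 with rfl | hne
    · have hz : G (1 : ℝ) = 0 := by
        rw [hGdef]
        simp [Complex.ofReal_one, Complex.one_cpow]
      rw [hz, norm_zero]
      positivity
    · have hu : ∀ u ∈ [[(1 : ℝ), t]], (1 : ℝ) / 2 ≤ u := by
        intro u hu
        rcases le_total 1 t with h | h
        · rw [uIcc_of_le h] at hu; linarith [hu.1]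
        · rw [uIcc_of_ge h] at hu; linarith [hu.1]
      have hs2ne : s - 2 ≠ -1 := by
        intro hco
        exact hsne1 (by linear_combination hco)
      have hderiv : ∀ u ∈ [[(1 : ℝ), t]],
          HasDerivAt (fun y : ℝ => (y : ℂ) ^ (s - 1) / (s - 1)) ((u : ℂ) ^ (s - 2)) u := by
        intro u hmem
        have h := hasDerivAt_ofReal_cpow_const' (x := u)
          (ne_of_gt (by linarith [hu u hmem] : (0 : ℝ) < u)) hs2ne
        simpa [show s - 2 + 1 = s - 1 by ring] using h
      have hcont2 : ContinuousOn (fun u : ℝ => (u : ℂ) ^ (s - 2)) [[(1 : ℝ), t]] := by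
        intro u hmem
        exact (continuousAt_ofReal_cpow_const u _
          (Or.inr (ne_of_gt (by linarith [hu u hmem] : (0 : ℝ) < u)))).continuousWithinAt
      have hftc := intervalIntegral.integral_eq_sub_of_hasDerivAt hderiv
        hcont2.intervalIntegrable
      have hval : (t : ℂ) ^ (s - 1) - 1 = (s - 1) * ∫ u in (1 : ℝ)..t, (u : ℂ) ^ (s - 2) := by
        rw [hftc, Complex.ofReal_one, Complex.one_cpow]
        field_simp
      have hIb : ‖∫ u in (1 : ℝ)..t, (u : ℂ) ^ (s - 2)‖ ≤ 4 * |t - 1| := by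
        apply intervalIntegral.norm_integral_le_of_norm_le_const
        intro u hmem
        have hmin : (1 : ℝ) / 2 ≤ min 1 t := le_min (by norm_num) h1
        have hu12 : (1 : ℝ) / 2 < u := lt_of_le_of_lt hmin hmem.1
        have h0 : (0 : ℝ) < u := by linarith
        rw [Complex.norm_cpow_eq_rpow_re_of_pos h0,
          show (s - 2).re = -(3 / 2) by rw [Complex.sub_re, hre]; norm_num]
        rcases le_total u 1 with hle | hge
        · have hh := Real.rpow_le_rpow_of_exponent_ge h0 hle
            (by norm_num : (-2 : ℝ) ≤ -(3 / 2))
          have h2' : u ^ (-2 : ℝ) = (u ^ 2)⁻¹ := by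
            rw [show (-2 : ℝ) = -((2 : ℕ) : ℝ) by norm_num, Real.rpow_neg h0.le,
              Real.rpow_natCast]
          have h4 : (u ^ 2)⁻¹ ≤ 4 := by
            rw [inv_le_comm₀ (by nlinarith) (by norm_num)]
            nlinarith
          rw [h2'] at hh
          linarith
        · have hh := Real.rpow_le_rpow_of_exponent_le hge (by norm_num : (-(3 / 2) : ℝ) ≤ 0)
          rw [Real.rpow_zero] at hh
          linarith
      show ‖((t : ℂ) ^ (s - 1) - 1) / (1 - (t : ℂ))‖ ≤ 4 * ‖s - 1‖
      rw [hval, norm_div, norm_mul, norm_one_sub_ofReal, abs_sub_comm 1 t,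
        div_le_iff₀ (abs_pos.mpr (sub_ne_zero.mpr hne))]
      calc ‖s - 1‖ * ‖∫ u in (1 : ℝ)..t, (u : ℂ) ^ (s - 2)‖
          ≤ ‖s - 1‖ * (4 * |t - 1|) :=
        mul_le_mul_of_nonneg_left hIb (norm_nonneg _)
      _ = 4 * ‖s - 1‖ * |t - 1| := by ring
  -- integrability of G and H on mid intervals
  have hcontG : ∀ {a b : ℝ}, (∀ t ∈ [[a, b]], 0 < t ∧ t ≠ 1) →
      IntervalIntegrable G volume a b := by
    intro a b hS
    apply ContinuousOn.intervalIntegrable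
    intro t ht
    exact (((continuousAt_ofReal_cpow_const t _ (Or.inr (hS t ht).1.ne')).sub
      continuousAt_const).div
      ((continuous_const.sub Complex.continuous_ofReal).continuousAt)
      (one_sub_ofReal_ne (hS t ht).2)).continuousWithinAt
  have hcontH : ∀ {a b : ℝ}, (∀ t ∈ [[a, b]], 0 < t ∧ t ≠ 1) →
      IntervalIntegrable H volume a b := by
    intro a b hS
    apply ContinuousOn.intervalIntegrable
    intro t ht
    exact (continuousAt_const.div
      ((continuous_const.sub Complex.continuous_ofReal).continuousAt)
      (one_sub_ofReal_ne (hS t ht).2)).continuousWithinAt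
  have hmem1 : ∀ t ∈ [[(1 / 2 : ℝ), 1 - ε]], 0 < t ∧ t ≠ 1 := by
    intro t ht
    rw [uIcc_of_le (by linarith)] at ht
    exact ⟨by linarith [ht.1], ne_of_lt (by linarith [ht.2])⟩
  have hmem2 : ∀ t ∈ [[(1 + ε : ℝ), 2]], 0 < t ∧ t ≠ 1 := by
    intro t ht
    rw [uIcc_of_le (by linarith)] at ht
    exact ⟨by linarith [ht.1], ne_of_gt (by linarith [ht.1])⟩
  have hM1 : (∫ t in (1 / 2 : ℝ)..(1 - ε), f t) =
      (∫ t in (1 / 2 : ℝ)..(1 - ε), G t) + ∫ t in (1 / 2 : ℝ)..(1 - ε), H t := by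
    rw [← intervalIntegral.integral_add (hcontG hmem1) (hcontH hmem1)]
    exact intervalIntegral.integral_congr fun t _ => hfGH t
  have hM2 : (∫ t in (1 + ε : ℝ)..2, f t) =
      (∫ t in (1 + ε : ℝ)..2, G t) + ∫ t in (1 + ε : ℝ)..2, H t := by
    rw [← intervalIntegral.integral_add (hcontG hmem2) (hcontH hmem2)]
    exact intervalIntegral.integral_congr fun t _ => hfGH t
  -- H integrals
  have hH12 : (∫ t in (1 / 2 : ℝ)..(1 - ε), H t) + (∫ t in (1 + ε : ℝ)..2, H t) =
      ((Real.log (1 / 2) : ℝ) : ℂ) := by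
    rw [hHdef]
    rw [log_integral (fun t ht => by
        rw [uIcc_of_le (by linarith)] at ht; intro h; have := ht.2; linarith),
      log_integral (fun t ht => by
        rw [uIcc_of_le (by linarith)] at ht; intro h; have := ht.1; linarith)]
    rw [← Complex.ofReal_add]
    congr 1
    rw [show (1 : ℝ) - (1 - ε) = ε by ring, show (1 : ℝ) - (1 + ε) = -ε by ring,
      show (1 : ℝ) - 2 = -1 by norm_num, Real.log_neg_eq_log, Real.log_neg_eq_log,
      Real.log_one, show (1 : ℝ) - 1 / 2 = 1 / 2 by norm_num]
    ring
  have hHnorm : ‖(∫ t in (1 / 2 : ℝ)..(1 - ε), H t) + (∫ t in (1 + ε : ℝ)..2, H t)‖ ≤ 1 := by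
    rw [hH12, Complex.norm_real, Real.norm_eq_abs,
      show (1 / 2 : ℝ) = 2⁻¹ by norm_num, Real.log_inv, abs_neg,
      _root_.abs_of_nonneg (Real.log_nonneg (by norm_num))]
    linarith [Real.log_two_lt_d9]
  -- G bounds
  have hG1 : ‖∫ t in (1 / 2 : ℝ)..(1 - ε), G t‖ ≤ 4 * ‖s - 1‖ := by
    calc ‖∫ t in (1 / 2 : ℝ)..(1 - ε), G t‖ ≤ 4 * ‖s - 1‖ * |1 - ε - 1 / 2| := by
          apply intervalIntegral.norm_integral_le_of_norm_le_const
          intro u hu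
          rw [uIoc_of_le (by linarith)] at hu
          exact hG u (le_of_lt hu.1) (by linarith [hu.2])
    _ ≤ 4 * ‖s - 1‖ * 1 := by
          apply mul_le_mul_of_nonneg_left _ (by positivity)
          rw [_root_.abs_of_nonneg (by linarith)]
          linarith
    _ = 4 * ‖s - 1‖ := mul_one _
  have hG2 : ‖∫ t in (1 + ε : ℝ)..2, G t‖ ≤ 4 * ‖s - 1‖ := by
    calc ‖∫ t in (1 + ε : ℝ)..2, G t‖ ≤ 4 * ‖s - 1‖ * |2 - (1 + ε)| := by
          apply intervalIntegral.norm_integral_le_of_norm_le_const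
          intro u hu
          rw [uIoc_of_le (by linarith)] at hu
          exact hG u (by linarith [hu.1]) hu.2
    _ ≤ 4 * ‖s - 1‖ * 1 := by
          apply mul_le_mul_of_nonneg_left _ (by positivity)
          rw [_root_.abs_of_nonneg (by linarith)]
          linarith
    _ = 4 * ‖s - 1‖ := mul_one _
  -- J1 bound
  have hJ1 : ‖∫ t in (0 : ℝ)..(1 / 2), f t‖ ≤ 4 := by
    rw [intervalIntegral.integral_of_le (by norm_num : (0 : ℝ) ≤ 1 / 2)]
    refine le_trans (norm_integral_le_of_norm_le hmaj1
      ((ae_restrict_iff' measurableSet_Ioc).2 (Eventually.of_forall hbd1))) ?_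
    rw [← intervalIntegral.integral_of_le (by norm_num : (0 : ℝ) ≤ 1 / 2),
      intervalIntegral.integral_const_mul, integral_rpow (Or.inl (by norm_num))]
    have hle1 : (1 / 2 : ℝ) ^ (-(1 / 2 : ℝ) + 1) ≤ 1 :=
      Real.rpow_le_one (by norm_num) (by norm_num) (by norm_num)
    have hge0 : (0 : ℝ) ≤ (1 / 2 : ℝ) ^ (-(1 / 2 : ℝ) + 1) := Real.rpow_nonneg (by norm_num) _
    rw [show ((0 : ℝ)) ^ (-(1 / 2 : ℝ) + 1) = 0 from Real.zero_rpow (by norm_num)]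
    rw [show (-(1 / 2 : ℝ) + 1) = 1 / 2 by norm_num] at hle1 hge0 ⊢
    rw [sub_zero]
    linarith
  -- J5 bound
  have hJ5 : ‖∫ t in Ioi (2 : ℝ), f t‖ ≤ 4 := by
    refine le_trans (norm_integral_le_of_norm_le hmaj5
      ((ae_restrict_iff' measurableSet_Ioi).2 (Eventually.of_forall hbd5))) ?_
    rw [MeasureTheory.integral_const_mul, integral_Ioi_rpow_of_lt (by norm_num) (by norm_num)]
    have h21 : (2 : ℝ) ^ (-(3 / 2 : ℝ) + 1) ≤ 1 :=
      Real.rpow_le_one_of_one_le_of_nonpos (by norm_num) (by norm_num)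
    have h20 : (0 : ℝ) ≤ (2 : ℝ) ^ (-(3 / 2 : ℝ) + 1) := Real.rpow_nonneg (by norm_num) _
    rw [show (-(3 / 2 : ℝ) + 1) = -(1 / 2) by norm_num] at h21 h20 ⊢
    rw [show -(2 : ℝ) ^ (-(1 / 2 : ℝ)) / (-(1 / 2)) = 2 * (2 : ℝ) ^ (-(1 / 2 : ℝ)) by ring]
    linarith
  -- assemble
  rw [hA, hB, hM1, hM2]
  have hrearr : (∫ t in (0 : ℝ)..(1 / 2), f t) +
      ((∫ t in (1 / 2 : ℝ)..(1 - ε), G t) + ∫ t in (1 / 2 : ℝ)..(1 - ε), H t) +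
      ((∫ t in (1 + ε : ℝ)..2, G t) + (∫ t in (1 + ε : ℝ)..2, H t) +
        ∫ t in Ioi (2 : ℝ), f t) =
      (∫ t in (0 : ℝ)..(1 / 2), f t) + (∫ t in (1 / 2 : ℝ)..(1 - ε), G t) +
      (∫ t in (1 + ε : ℝ)..2, G t) +
      ((∫ t in (1 / 2 : ℝ)..(1 - ε), H t) + ∫ t in (1 + ε : ℝ)..2, H t) +
      ∫ t in Ioi (2 : ℝ), f t := by abel
  rw [hrearr]
  have hfinal := calc
    ‖(∫ t in (0 : ℝ)..(1 / 2), f t) + (∫ t in (1 / 2 : ℝ)..(1 - ε), G t) +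
      (∫ t in (1 + ε : ℝ)..2, G t) +
      ((∫ t in (1 / 2 : ℝ)..(1 - ε), H t) + ∫ t in (1 + ε : ℝ)..2, H t) +
      ∫ t in Ioi (2 : ℝ), f t‖
      ≤ ‖(∫ t in (0 : ℝ)..(1 / 2), f t)‖ + ‖∫ t in (1 / 2 : ℝ)..(1 - ε), G t‖ +
        ‖∫ t in (1 + ε : ℝ)..2, G t‖ +
        ‖(∫ t in (1 / 2 : ℝ)..(1 - ε), H t) + ∫ t in (1 + ε : ℝ)..2, H t‖ +
        ‖∫ t in Ioi (2 : ℝ), f t‖ := by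
      refine le_trans (norm_add_le _ _) ?_
      gcongr
      refine le_trans (norm_add_le _ _) ?_
      gcongr
      refine le_trans (norm_add_le _ _) ?_
      gcongr
      exact norm_add_le _ _
    _ ≤ 4 + 4 * ‖s - 1‖ + 4 * ‖s - 1‖ + 1 + 4 := by gcongr
  refine le_trans hfinal ?_
  linarith

/-- **estimate (30).** There is an absolute constant `C > 0` such that
`|φ_ε(s)| ≤ C|s|` for all `0 < ε < 1/2` and all `s` on the line `Re s = 1/2`. -/
theorem phiEps_uniform_bound :
    ∃ C : ℝ, 0 < C ∧ ∀ ε : ℝ, 0 < ε → ε < 1 / 2 → ∀ τ : ℝ,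
      ‖phiEps ε (1 / 2 + τ * I)‖ ≤ C * ‖((1 / 2 : ℂ) + τ * I)‖ := by
  refine ⟨42, by norm_num, fun ε hε0 hε2 τ => ?_⟩
  have hre : ((1 / 2 : ℂ) + τ * I).re = 1 / 2 := by simp
  have h := key hre hε0 hε2
  rw [phiEps, norm_mul]
  have hpi : ‖((1 / Real.pi : ℝ) : ℂ)‖ ≤ 1 := by
    rw [Complex.norm_real, Real.norm_eq_abs, _root_.abs_of_nonneg (by positivity),
      div_le_one Real.pi_pos]
    linarith [Real.pi_gt_three]
  calc ‖((1 / Real.pi : ℝ) : ℂ)‖ * ‖_‖ ≤ 1 * (42 * ‖(1 / 2 : ℂ) + τ * I‖) :=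
    mul_le_mul hpi h (norm_nonneg _) (by norm_num)
  _ = 42 * ‖(1 / 2 : ℂ) + τ * I‖ := one_mul _
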